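/- Let n, k ∈ ℕ, let A ∈ ℝ^{2n×2k} be symplectic (Aᵀ J_{2n} A = J_{2k}) with A⁺ := J_{2k}ᵀ Aᵀ J_{2n}, let z ∈ ℝ^{2k}, and let H : ℝ^{2n} → ℝ be differentiable at A z (gradients taken with respect to the Euclidean inner product). Then the reduced Hamiltonian H̃ : ℝ^{2k} → ℝ, H̃(w) := H(A w), is differentiable at z, and A⁺ · (J_{2n} ∇H(A z)) = J_{2k} ∇H̃(z); that is, the symplectic projection of the Hamiltonian vector field of H at A z equals the Hamiltonian vector field of H̃ = H∘A at z. -/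

import Mathlib

open Matrix

/-- The `2m × 2m` Poisson matrix `[[0, I], [-I, 0]]`, indexed by `Fin m ⊕ Fin m`. -/
noncomputable def Jmat (m : ℕ) : Matrix (Fin m ⊕ Fin m) (Fin m ⊕ Fin m) ℝ :=
  Matrix.fromBlocks 0 1 (-1) 0

open InnerProductSpace in
noncomputable def mulVecCLM {ι₁ ι₂ : Type*} [Fintype ι₁] [Fintype ι₂] [DecidableEq ι₁]
    (M : Matrix ι₂ ι₁ ℝ) : EuclideanSpace ℝ ι₁ →L[ℝ] EuclideanSpace ℝ ι₂ :=
  LinearMap.toContinuousLinearMap (Matrix.toEuclideanLin M)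

open InnerProductSpace in
lemma gradAux {ι₁ ι₂ : Type*} [Fintype ι₁] [Fintype ι₂] [DecidableEq ι₁]
    (M : Matrix ι₂ ι₁ ℝ) (H : EuclideanSpace ℝ ι₂ → ℝ) (z : EuclideanSpace ℝ ι₁)
    (g : EuclideanSpace ℝ ι₂) (hg : HasGradientAt H g (WithLp.toLp 2 (M.mulVec z))) :
    HasGradientAt (fun w : EuclideanSpace ℝ ι₁ => H (WithLp.toLp 2 (M.mulVec w)))
      (WithLp.toLp 2 (Mᵀ.mulVec g)) z := by
  rw [hasGradientAt_iff_hasFDerivAt] at hg ⊢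
  have h1 : HasFDerivAt (fun w : EuclideanSpace ℝ ι₁ => H (WithLp.toLp 2 (M.mulVec w)))
      ((toDual ℝ _ g).comp (mulVecCLM M)) z := hg.comp z (mulVecCLM M).hasFDerivAt
  suffices heq : toDual ℝ (EuclideanSpace ℝ ι₁) (WithLp.toLp 2 (Mᵀ *ᵥ g)) =
      (toDual ℝ _ g).comp (mulVecCLM M) by rw [heq]; exact h1
  ext v
  simp only [ContinuousLinearMap.comp_apply, toDual_apply_apply]
  have hv : (mulVecCLM M) v = WithLp.toLp 2 (M *ᵥ v) := rfl
  rw [hv]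
  simp only [PiLp.inner_apply, RCLike.inner_apply, conj_trivial]
  change v ⬝ᵥ (Mᵀ *ᵥ g) = (M *ᵥ v) ⬝ᵥ g
  rw [dotProduct_comm v, dotProduct_comm (M *ᵥ v), Matrix.dotProduct_mulVec, Matrix.mulVec_transpose]

lemma Jmat_transpose (m : ℕ) : (Jmat m)ᵀ = -Jmat m := by
  simp only [Jmat, Matrix.fromBlocks_transpose, Matrix.fromBlocks_neg]
  norm_num

lemma Jmat_mul_Jmat (m : ℕ) : Jmat m * Jmat m = -1 := by
  simp only [Jmat, Matrix.fromBlocks_multiply, ← Matrix.fromBlocks_one, Matrix.fromBlocks_neg]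
  norm_num

/-- For symplectic `A` with `A⁺ := J_{2k}ᵀ Aᵀ J_{2n}`, the reduced Hamiltonian
`H̃ = H ∘ A` is differentiable at `z`, and the symplectic projection of the Hamiltonian
vector field of `H` at `Az` equals the Hamiltonian vector field of `H̃` at `z`:
`A⁺ (J_{2n} ∇H(Az)) = J_{2k} ∇H̃(z)`.  Gradients are taken with respect to the
Euclidean inner product. -/
theorem stmt6 (n k : ℕ) (A : Matrix (Fin n ⊕ Fin n) (Fin k ⊕ Fin k) ℝ)
    (hA : Aᵀ * Jmat n * A = Jmat k)
    (z : EuclideanSpace ℝ (Fin k ⊕ Fin k))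
    (H : EuclideanSpace ℝ (Fin n ⊕ Fin n) → ℝ)
    (hH : DifferentiableAt ℝ H (WithLp.toLp 2 (A.mulVec z))) :
    DifferentiableAt ℝ (fun w : EuclideanSpace ℝ (Fin k ⊕ Fin k) => H (WithLp.toLp 2 (A.mulVec w))) z ∧
      ((Jmat k)ᵀ * Aᵀ * Jmat n).mulVec ((Jmat n).mulVec
          (gradient (F := EuclideanSpace ℝ (Fin n ⊕ Fin n)) H (WithLp.toLp 2 (A.mulVec z))))
        = (Jmat k).mulVec
            (gradient (F := EuclideanSpace ℝ (Fin k ⊕ Fin k))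
              (fun w => H (WithLp.toLp 2 (A.mulVec w))) z) := by
  have hg := hH.hasGradientAt
  have hcomp := gradAux A H z _ hg
  refine ⟨hcomp.differentiableAt, ?_⟩
  rw [hcomp.gradient, WithLp.ofLp_toLp, Matrix.mulVec_mulVec, Matrix.mulVec_mulVec]
  congr 1
  rw [Matrix.mul_assoc ((Jmat k)ᵀ * Aᵀ) (Jmat n) (Jmat n), Jmat_mul_Jmat, Jmat_transpose]
  simp
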